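/- For positive reals x_1,...,x_n in (0,1/2] with weights μ_i ≥ 0 summing to 1, one has 1/G'_n - 1/A'_n ≤ 1/G_n - 1/A_n, where A, G are weighted arithmetic and geometric means and primes denote means of 1 - x_i. -/

import Mathlib

lemma logit_convex' : ConvexOn ℝ (Set.Ioc (0:ℝ) (1/2)) (fun z => Real.log (1 - z) - Real.log z) := by
  have hint : interior (Set.Ioc (0:ℝ) (1/2)) = Set.Ioo (0:ℝ) (1/2) := interior_Ioc
  apply convexOn_of_hasDerivWithinAt2_nonneg (f' := fun z => -(1 - z)⁻¹ - z⁻¹)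
      (f'' := fun z => (z^2)⁻¹ - ((1-z)^2)⁻¹) (convex_Ioc _ _)
  · apply ContinuousOn.sub
    · apply ContinuousOn.log (by fun_prop)
      intro z hz
      simp only [Set.mem_Ioc] at hz
      nlinarith [hz.1, hz.2]
    · apply ContinuousOn.log (by fun_prop)
      intro z hz
      simp only [Set.mem_Ioc] at hz
      linarith [hz.1]
  · intro z hz
    rw [hint] at hz
    simp only [Set.mem_Ioo] at hz
    have h1 : (1:ℝ) - z ≠ 0 := by nlinarith [hz.1, hz.2]
    have h2 : z ≠ 0 := ne_of_gt hz.1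
    have d1 : HasDerivAt (fun z : ℝ => Real.log (1 - z)) (-(1 - z)⁻¹) z := by
      have : HasDerivAt (fun z : ℝ => (1:ℝ) - z) (-1) z := (hasDerivAt_id z).const_sub 1
      simpa [div_eq_mul_inv] using this.log h1
    have d2 : HasDerivAt Real.log z⁻¹ z := Real.hasDerivAt_log h2
    exact ((d1.sub d2).congr_deriv (by ring)).hasDerivWithinAt
  · intro z hz
    rw [hint] at hz
    simp only [Set.mem_Ioo] at hz
    have h1 : (1:ℝ) - z ≠ 0 := by nlinarith [hz.1, hz.2]
    have h2 : z ≠ 0 := ne_of_gt hz.1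
    have d1 : HasDerivAt (fun z : ℝ => -(1 - z)⁻¹) (-((1-z)^2)⁻¹) z := by
      have hb : HasDerivAt (fun z : ℝ => (1:ℝ) - z) (-1) z := (hasDerivAt_id z).const_sub 1
      have := (hb.inv h1).neg
      exact this.congr_deriv (by ring : -(-(-1:ℝ) / (1 - z) ^ 2) = -((1-z)^2)⁻¹)
    have d2 : HasDerivAt (fun z : ℝ => -z⁻¹) ((z^2)⁻¹) z := by
      have := ((hasDerivAt_id z).inv h2).neg
      exact this.congr_deriv (by simp only [id]; ring : -(-1 / id z ^ 2) = (z^2)⁻¹)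
    exact ((d1.add d2).congr_deriv (by ring)).hasDerivWithinAt
  · intro z hz
    rw [hint] at hz
    simp only [Set.mem_Ioo] at hz
    have h0 : 0 < z := hz.1
    have h1 : z ≤ 1 - z := by linarith [hz.2]
    have hz1 : (0:ℝ) < 1 - z := lt_of_lt_of_le h0 h1
    have : ((1-z)^2)⁻¹ ≤ (z^2)⁻¹ := by
      apply inv_anti₀ (by positivity)
      nlinarith
    linarith

/-- The reciprocal additive Ky Fan type inequality `1/G'_n - 1/A'_n ≤ 1/G_n - 1/A_n`. -/
theorem kyFan_reciprocal_geom_arith (n : ℕ) (x μ : Fin n → ℝ)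
    (hx : ∀ i, x i ∈ Set.Ioc (0:ℝ) (1/2)) (hμ : ∀ i, 0 ≤ μ i)
    (hsum : ∑ i, μ i = 1)
    (A G A' G' : ℝ)
    (hA : A = ∑ i, μ i * x i) (hG : G = ∏ i, x i ^ μ i)
    (hA' : A' = ∑ i, μ i * (1 - x i)) (hG' : G' = ∏ i, (1 - x i) ^ μ i) :
    1 / G' - 1 / A' ≤ 1 / G - 1 / A := by
  have hx0 : ∀ i, 0 < x i := fun i => (hx i).1
  have hxh : ∀ i, x i ≤ 1/2 := fun i => (hx i).2
  have hx1 : ∀ i, 0 < 1 - x i := fun i => by linarith [hxh i]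
  -- A' = 1 - A
  have hA'eq : A' = 1 - A := by
    rw [hA', hA]
    simp [mul_sub, Finset.sum_sub_distrib, hsum]
  -- positivity of A
  obtain ⟨i₀, hi₀⟩ : ∃ i, μ i ≠ 0 := by
    by_contra h
    push_neg at h
    simp [h] at hsum
  have hApos : 0 < A := by
    rw [hA]
    exact Finset.sum_pos' (fun j _ => mul_nonneg (hμ j) (hx0 j).le)
      ⟨i₀, Finset.mem_univ i₀, mul_pos (lt_of_le_of_ne (hμ i₀) (Ne.symm hi₀)) (hx0 i₀)⟩
  have hAle : A ≤ 1/2 := by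
    rw [hA]
    calc ∑ i, μ i * x i ≤ ∑ i, μ i * (1/2) :=
          Finset.sum_le_sum fun j _ => mul_le_mul_of_nonneg_left (hxh j) (hμ j)
      _ = 1/2 := by rw [← Finset.sum_mul, hsum, one_mul]
  have hA'pos : 0 < A' := by rw [hA'eq]; linarith
  have hAA' : A ≤ A' := by rw [hA'eq]; linarith
  have hGpos : 0 < G := by
    rw [hG]; exact Finset.prod_pos fun j _ => Real.rpow_pos_of_pos (hx0 j) _
  have hG'pos : 0 < G' := by
    rw [hG']; exact Finset.prod_pos fun j _ => Real.rpow_pos_of_pos (hx1 j) _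
  -- AM-GM : G' ≤ A'
  have hG'le : G' ≤ A' := by
    rw [hG', hA']
    exact Real.geom_mean_le_arith_mean_weighted _ μ (fun i => 1 - x i)
      (fun j _ => hμ j) hsum (fun j _ => (hx1 j).le)
  -- Ky Fan : A' * G ≤ A * G'
  have hlogG : Real.log G = ∑ i, μ i * Real.log (x i) := by
    rw [hG, Real.log_prod (fun j _ => ne_of_gt (Real.rpow_pos_of_pos (hx0 j) _))]
    exact Finset.sum_congr rfl fun j _ => Real.log_rpow (hx0 j) _
  have hlogG' : Real.log G' = ∑ i, μ i * Real.log (1 - x i) := by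
    rw [hG', Real.log_prod (fun j _ => ne_of_gt (Real.rpow_pos_of_pos (hx1 j) _))]
    exact Finset.sum_congr rfl fun j _ => Real.log_rpow (hx1 j) _
  have hjensen := logit_convex'.map_sum_le (t := Finset.univ) (w := μ) (p := x)
      (fun j _ => hμ j) hsum (fun j _ => hx j)
  have hkey : Real.log (1 - A) - Real.log A ≤ Real.log G' - Real.log G := by
    have h1 : ∑ i, μ i • x i = A := by rw [hA]; rfl
    rw [h1] at hjensen
    calc Real.log (1 - A) - Real.log A ≤ ∑ i, μ i • (Real.log (1 - x i) - Real.log (x i)) :=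
          hjensen
      _ = Real.log G' - Real.log G := by
          rw [hlogG, hlogG', ← Finset.sum_sub_distrib]
          exact Finset.sum_congr rfl fun j _ => by simp [smul_eq_mul, mul_sub]
  have hKyFan : A' * G ≤ A * G' := by
    rw [← Real.log_le_log_iff (by positivity) (by positivity),
      Real.log_mul (ne_of_gt hA'pos) (ne_of_gt hGpos),
      Real.log_mul (ne_of_gt hApos) (ne_of_gt hG'pos), hA'eq]
    linarith
  -- final algebra
  have key2 : G * G' * (A' - A) ≤ A * A' * (G' - G) := by
    nlinarith [mul_nonneg hA'pos.le (sub_nonneg.2 hKyFan),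
      mul_nonneg (mul_nonneg hGpos.le (sub_nonneg.2 hAA')) (sub_nonneg.2 hG'le)]
  rw [div_sub_div _ _ (ne_of_gt hG'pos) (ne_of_gt hA'pos),
    div_sub_div _ _ (ne_of_gt hGpos) (ne_of_gt hApos),
    div_le_div_iff₀ (by positivity) (by positivity)]
  nlinarith [key2]
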